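/- Fix t ≥ 0, x > 0, s > 0 and i ∈ χ. Then the function v ↦ L(t,x,s,i,v) is differentiable on (0,∞) and satisfies, for every v > 0, the identity L·(∂L/∂v) + r(i)·L/σ̄ + σ(t+v,i)²·L²/(2σ̄²) − σ(t+v,i)²·L/(2σ̄) = 0, where L = L(t,x,s,i,v) and σ̄ = σ̄(t,i,v). -/

import Mathlib

open MeasureTheory Real Filter Set


noncomputable def sigbar {k : ℕ} (σ : ℝ → Fin k → ℝ) (t : ℝ) (i : Fin k) (v : ℝ) : ℝ :=
  Real.sqrt (∫ u in t..(t+v), (σ u i)^2)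

noncomputable def Lfun {k : ℕ} (r : Fin k → ℝ) (σ : ℝ → Fin k → ℝ)
    (t x s : ℝ) (i : Fin k) (v : ℝ) : ℝ :=
  (Real.log (x / s) - ∫ u in t..(t+v), (r i - (σ u i)^2 / 2)) / sigbar σ t i v

noncomputable def alphaDens {k : ℕ} (r : Fin k → ℝ) (σ : ℝ → Fin k → ℝ)
    (x t s : ℝ) (i : Fin k) (v : ℝ) : ℝ :=
  Real.exp (-(Lfun r σ t x s i v)^2 / 2) / (Real.sqrt (2 * Real.pi) * x * sigbar σ t i v)

theorem stmt_5 {k : ℕ} (r : Fin k → ℝ) (σ : ℝ → Fin k → ℝ)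
    (hr : ∀ i : Fin k, 0 ≤ r i)
    (hσpos : ∀ u : ℝ, 0 ≤ u → ∀ i : Fin k, 0 < σ u i)
    (hσcont : ∀ i : Fin k, ContinuousOn (fun u => σ u i) (Set.Ici 0))
    (t x s : ℝ) (ht : 0 ≤ t) (hx : 0 < x) (hs : 0 < s) (i : Fin k) :
    ∀ v : ℝ, 0 < v → ∃ L' : ℝ,
      HasDerivAt (fun w => Lfun r σ t x s i w) L' v ∧
      Lfun r σ t x s i v * L'
        + r i * Lfun r σ t x s i v / sigbar σ t i v
        + (σ (t+v) i)^2 * (Lfun r σ t x s i v)^2 / (2 * (sigbar σ t i v)^2)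
        - (σ (t+v) i)^2 * Lfun r σ t x s i v / (2 * sigbar σ t i v) = 0 := by
  intro v hv
  have htv : 0 < t + v := by linarith
  have hsub : Set.uIcc t (t + v) ⊆ Set.Ici 0 := by
    rw [Set.uIcc_of_le (by linarith)]
    exact fun u hu => le_trans ht hu.1
  -- continuity facts
  have hc2 : ContinuousOn (fun u => (σ u i)^2) (Set.Ici 0) := (hσcont i).pow 2
  have hc3 : ContinuousOn (fun u => r i - (σ u i)^2 / 2) (Set.Ici 0) :=
    continuousOn_const.sub (hc2.div_const 2)
  -- integrability
  have hint2 : IntervalIntegrable (fun u => (σ u i)^2) volume t (t + v) :=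
    (hc2.mono hsub).intervalIntegrable
  have hint3 : IntervalIntegrable (fun u => r i - (σ u i)^2 / 2) volume t (t + v) :=
    (hc3.mono hsub).intervalIntegrable
  -- derivative of A(w) = ∫ t..(t+w) σ²
  have hmemIoi : t + v ∈ Set.Ioi (0:ℝ) := htv
  have hopen : IsOpen (Set.Ioi (0:ℝ)) := isOpen_Ioi
  have hA' : HasDerivAt (fun y => ∫ u in t..y, (σ u i)^2) ((σ (t+v) i)^2) (t + v) :=
    intervalIntegral.integral_hasDerivAt_right hint2
      ((hc2.mono Set.Ioi_subset_Ici_self).stronglyMeasurableAtFilter hopen _ hmemIoi)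
      (hc2.continuousAt (Ici_mem_nhds htv))
  have hA : HasDerivAt (fun w => ∫ u in t..(t+w), (σ u i)^2) ((σ (t+v) i)^2) v := by
    have := hA'.comp v ((hasDerivAt_id v).const_add t)
    simpa [Function.comp_def] using this
  have hB' : HasDerivAt (fun y => ∫ u in t..y, (r i - (σ u i)^2 / 2))
      (r i - (σ (t+v) i)^2 / 2) (t + v) :=
    intervalIntegral.integral_hasDerivAt_right hint3
      ((hc3.mono Set.Ioi_subset_Ici_self).stronglyMeasurableAtFilter hopen _ hmemIoi)
      (hc3.continuousAt (Ici_mem_nhds htv))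
  have hB : HasDerivAt (fun w => ∫ u in t..(t+w), (r i - (σ u i)^2 / 2))
      (r i - (σ (t+v) i)^2 / 2) v := by
    have := hB'.comp v ((hasDerivAt_id v).const_add t)
    simpa [Function.comp_def] using this
  -- positivity of A
  have hApos : 0 < ∫ u in t..(t+v), (σ u i)^2 := by
    apply intervalIntegral.intervalIntegral_pos_of_pos_on hint2
    · intro u hu
      exact pow_pos (hσpos u (by linarith [hu.1]) i) 2
    · linarith
  set S := sigbar σ t i v with hS
  have hSpos : 0 < S := Real.sqrt_pos.mpr hApos
  have hSne : S ≠ 0 := ne_of_gt hSpos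
  -- derivative of sigbar
  have hsig : HasDerivAt (fun w => sigbar σ t i w)
      (1 / (2 * S) * (σ (t+v) i)^2) v := by
    have hsq := (Real.hasDerivAt_sqrt (ne_of_gt hApos)).comp v hA
    simpa [sigbar, hS, mul_comm, Function.comp_def] using hsq
  -- derivative of numerator
  have hN : HasDerivAt (fun w => Real.log (x / s) - ∫ u in t..(t+w), (r i - (σ u i)^2 / 2))
      (-(r i - (σ (t+v) i)^2 / 2)) v := hB.const_sub _
  -- derivative of L
  set N := Real.log (x / s) - ∫ u in t..(t+v), (r i - (σ u i)^2 / 2) with hNdef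
  have hL : HasDerivAt (fun w => Lfun r σ t x s i w)
      ((-(r i - (σ (t+v) i)^2 / 2) * S - N * (1 / (2 * S) * (σ (t+v) i)^2)) / S^2) v := by
    have := hN.div hsig hSne
    simpa [Lfun, hNdef, hS, Pi.div_def] using this
  refine ⟨_, hL, ?_⟩
  have hLval : Lfun r σ t x s i v = N / S := rfl
  rw [hLval]
  field_simp
  ring
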